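/- Wigner's friend with an additional reference system: Let V be the complex vector space of functions (ℤ/2) × (ℤ/2) × (ℤ/2) → ℂ with standard basis e_{(r,f,s)}, and let U be the linear map determined on the basis by U e_{(r,f,s)} = e_{(f, r−f, s−f)} (the change of quantum reference frame from Wigner W to the friend F for the group ℤ/2, where the slots hold the states of the reference system R, the friend F, and the system S, and after the change the slots hold W, R, S). Then for all α, β ∈ ℂ, U(α·e_{(0,0,0)} + β·e_{(0,1,1)}) = α·e_{(0,0,0)} + β·e_{(1,1,0)}; moreover the output factorizes as w(a, b, c) = m(a, b)·d(c) with m(0,0) = α, m(1,1) = β, m(0,1) = m(1,0) = 0, d(0) = 1, d(1) = 0. -/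

import Mathlib

/-- Standard basis vector `e_p` of the space of functions
`(ℤ/2) × (ℤ/2) × (ℤ/2) → ℂ`. -/
def basis3 (p : ZMod 2 × ZMod 2 × ZMod 2) : ZMod 2 × ZMod 2 × ZMod 2 → ℂ :=
  fun q => if q = p then 1 else 0

/-- Wigner's friend with an additional reference system: if `U` is the linear map
determined on the basis by `U e_{(r,f,s)} = e_{(f, r−f, s−f)}`, then the state
`α e_{(0,0,0)} + β e_{(0,1,1)}` Wigner assigns is mapped to
`α e_{(0,0,0)} + β e_{(1,1,0)}`, which factorizes as `w(a,b,c) = m(a,b)·d(c)` with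
`m(0,0) = α, m(1,1) = β, m(0,1) = m(1,0) = 0, d(0) = 1, d(1) = 0`. -/
theorem wigner_friend_extra_reference
    (U : (ZMod 2 × ZMod 2 × ZMod 2 → ℂ) →ₗ[ℂ] (ZMod 2 × ZMod 2 × ZMod 2 → ℂ))
    (hU : ∀ r f s : ZMod 2, U (basis3 (r, f, s)) = basis3 (f, r - f, s - f)) :
    ∀ α β : ℂ,
      U (α • basis3 (0, 0, 0) + β • basis3 (0, 1, 1)) =
          α • basis3 (0, 0, 0) + β • basis3 (1, 1, 0) ∧
        ∃ (m : ZMod 2 × ZMod 2 → ℂ) (d : ZMod 2 → ℂ),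
          (m (0, 0) = α ∧ m (1, 1) = β ∧ m (0, 1) = 0 ∧ m (1, 0) = 0 ∧
              d 0 = 1 ∧ d 1 = 0) ∧
            (α • basis3 (0, 0, 0) + β • basis3 (1, 1, 0)) =
              fun p => m (p.1, p.2.1) * d p.2.2 := by
  intro α β
  constructor
  · rw [map_add, map_smul, map_smul, hU 0 0 0, hU 0 1 1]; norm_num; rfl
  · refine ⟨fun q => if q = (0,0) then α else if q = (1,1) then β else 0,
      fun c => if c = 0 then 1 else 0, ?_, ?_⟩
    · refine ⟨rfl, rfl, rfl, rfl, rfl, rfl⟩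
    · funext p
      obtain ⟨a, b, c⟩ := p
      simp only [basis3, Pi.add_apply, Pi.smul_apply, smul_eq_mul]
      fin_cases a <;> fin_cases b <;> fin_cases c <;> simp +decide [Prod.ext_iff]
      · tauto
      · grind
      · tauto
      · grind
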